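/- Let H be a hypergraph and let G = G(H^d) be the co-occurrence graph of its dual hypergraph. Suppose that every maximal clique of G is a transversal of H. Then H is not dually conformal if and only if G contains a vertex v such that the open neighborhood N_G(v) of v in G is a transversal of H. -/

import Mathlib

open Finset
open scoped Classical

variable {V : Type*} [Fintype V] [DecidableEq V]

/-- A hypergraph on vertex set `V` is given by its finite set of hyperedges `E`;
the condition that every vertex belongs to at least one hyperedge. -/
def Covers (E : Finset (Finset V)) : Prop := ∀ v : V, ∃ e ∈ E, v ∈ e

/-- A hypergraph is Sperner if no hyperedge is contained in another hyperedge. -/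
def SpernerHG (E : Finset (Finset V)) : Prop := ∀ e ∈ E, ∀ f ∈ E, e ⊆ f → e = f

/-- A transversal of a hypergraph: a set of vertices intersecting all hyperedges. -/
def IsTransversal (E : Finset (Finset V)) (T : Finset V) : Prop := ∀ e ∈ E, (e ∩ T).Nonempty

/-- A minimal transversal: a transversal not properly containing another transversal. -/
def IsMinTransversal (E : Finset (Finset V)) (T : Finset V) : Prop :=
  IsTransversal E T ∧ ∀ T' ⊆ T, IsTransversal E T' → T' = T

/-- The dual hypergraph: its hyperedges are exactly the minimal transversals. -/
noncomputable def dualHG (E : Finset (Finset V)) : Finset (Finset V) :=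
  Finset.univ.filter fun T => IsMinTransversal E T

/-- The co-occurrence graph of a hypergraph: two distinct vertices are adjacent
iff some hyperedge contains both. -/
def coocGraph (E : Finset (Finset V)) : SimpleGraph V where
  Adj u v := u ≠ v ∧ ∃ e ∈ E, u ∈ e ∧ v ∈ e
  symm := by
    constructor
    rintro u v ⟨huv, e, he, hu, hv⟩
    exact ⟨Ne.symm huv, e, he, hv, hu⟩
  loopless := by
    constructor
    rintro v ⟨hv, -⟩
    exact hv rfl

/-- A maximal clique of a graph: a clique not properly contained in any other clique. -/
def IsMaxClique (G : SimpleGraph V) (C : Finset V) : Prop :=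
  G.IsClique (C : Set V) ∧ ∀ D : Finset V, G.IsClique (D : Set V) → C ⊆ D → D = C

/-- A hypergraph is conformal if every maximal clique of its co-occurrence graph
is a hyperedge. -/
def ConformalHG (E : Finset (Finset V)) : Prop :=
  ∀ C : Finset V, IsMaxClique (coocGraph E) C → C ∈ E

/-- A hypergraph is dually conformal if its dual hypergraph is conformal. -/
def DuallyConformalHG (E : Finset (Finset V)) : Prop :=
  ConformalHG (dualHG E)

/-- A clique transversal of a graph: a set of vertices meeting all maximal cliques. -/
def IsCliqueTransversal (G : SimpleGraph V) (X : Finset V) : Prop :=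
  ∀ C : Finset V, IsMaxClique G C → (C ∩ X).Nonempty

/-- A minimal clique transversal: a clique transversal not properly containing
another clique transversal. -/
def IsMinCliqueTransversal (G : SimpleGraph V) (X : Finset V) : Prop :=
  IsCliqueTransversal G X ∧ ∀ Y ⊆ X, IsCliqueTransversal G Y → Y = X

/-- The upper clique transversal number: the maximum size of a minimal clique
transversal. -/
noncomputable def uct (G : SimpleGraph V) : ℕ :=
  (Finset.univ.filter fun X : Finset V => IsMinCliqueTransversal G X).sup Finset.card

lemma exists_min_transversal_subset (E : Finset (Finset V)) :
    ∀ X : Finset V, IsTransversal E X → ∃ T ⊆ X, IsMinTransversal E T := by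
  intro X
  induction X using Finset.strongInduction with
  | _ X ih =>
    intro hX
    by_cases h : ∀ T' ⊆ X, IsTransversal E T' → T' = X
    · exact ⟨X, subset_rfl, hX, h⟩
    · push_neg at h
      obtain ⟨T', hsub, htr, hne⟩ := h
      obtain ⟨T, hTsub, hTmin⟩ := ih T' (ssubset_of_subset_of_ne hsub hne) htr
      exact ⟨T, hTsub.trans hsub, hTmin⟩

lemma exists_max_clique_superset (G : SimpleGraph V) (C : Finset V)
    (hC : G.IsClique (C : Set V)) : ∃ D, C ⊆ D ∧ IsMaxClique G D := by
  classical
  obtain ⟨D, hDS, hmax⟩ := Finset.exists_max_image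
    (Finset.univ.filter fun D : Finset V => G.IsClique (D : Set V) ∧ C ⊆ D)
    Finset.card ⟨C, by simp [hC]⟩
  simp only [Finset.mem_filter, Finset.mem_univ, true_and] at hDS
  refine ⟨D, hDS.2, hDS.1, ?_⟩
  intro D' hD' hsub
  have hle : D'.card ≤ D.card := hmax D' (by simp [hD', hDS.2.trans hsub])
  exact (Finset.eq_of_subset_of_card_le hsub hle).symm

/-- If every maximal clique of `G = G(H^d)` is a transversal of `H`,
then `H` is not dually conformal iff `G` has a vertex `v` whose open neighborhood
`N_G(v)` is a transversal of `H`. -/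
theorem not_dually_conformal_iff_neighborhood [Nonempty V] (E : Finset (Finset V))
    (hcov : Covers E)
    (hall : ∀ C : Finset V, IsMaxClique (coocGraph (dualHG E)) C → IsTransversal E C) :
    ¬ DuallyConformalHG E ↔
      ∃ v : V, IsTransversal E
        (Finset.univ.filter fun u => (coocGraph (dualHG E)).Adj v u) := by
  classical
  constructor
  · intro hndc
    unfold DuallyConformalHG ConformalHG at hndc
    push_neg at hndc
    obtain ⟨C, hCmax, hCnotdual⟩ := hndc
    have hCtr : IsTransversal E C := hall C hCmax
    have hCnotmin : ¬ IsMinTransversal E C := fun h => hCnotdual (by simp [dualHG, h])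
    have hex : ∃ T' ⊆ C, IsTransversal E T' ∧ T' ≠ C := by
      by_contra h
      push_neg at h
      exact hCnotmin ⟨hCtr, fun T' hs ht => h T' hs ht⟩
    obtain ⟨T', hsub, htr, hne⟩ := hex
    obtain ⟨v, hvC, hvT'⟩ := Finset.exists_of_ssubset (ssubset_of_subset_of_ne hsub hne)
    refine ⟨v, ?_⟩
    intro e he
    obtain ⟨x, hx⟩ := htr e he
    rw [Finset.mem_inter] at hx
    have hxC : x ∈ C := hsub hx.2
    have hxv : x ≠ v := fun h => hvT' (h ▸ hx.2)
    have hadj : (coocGraph (dualHG E)).Adj v x := hCmax.1 hvC hxC hxv.symm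
    exact ⟨x, Finset.mem_inter.mpr ⟨hx.1, by simp [hadj]⟩⟩
  · rintro ⟨v, hv⟩ hdc
    obtain ⟨T, hTsub, hTmin⟩ := exists_min_transversal_subset E _ hv
    have hTadj : ∀ u ∈ T, (coocGraph (dualHG E)).Adj v u := by
      intro u hu
      have := hTsub hu
      simp only [Finset.mem_filter, Finset.mem_univ, true_and] at this
      exact this
    have hvT : v ∉ T := fun h => (coocGraph (dualHG E)).loopless.irrefl v (hTadj v h)
    have hTdual : T ∈ dualHG E := by simp [dualHG, hTmin]
    have hclq : (coocGraph (dualHG E)).IsClique ((insert v T : Finset V) : Set V) := by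
      intro a ha b hb hab
      simp only [Finset.coe_insert, Set.mem_insert_iff, Finset.mem_coe] at ha hb
      rcases ha with rfl | ha
      · rcases hb with rfl | hb
        · exact absurd rfl hab
        · exact hTadj b hb
      · rcases hb with rfl | hb
        · exact (hTadj a ha).symm
        · exact ⟨hab, T, hTdual, ha, hb⟩
    obtain ⟨C, hsubC, hCmax⟩ := exists_max_clique_superset _ _ hclq
    have hCdual : C ∈ dualHG E := hdc C hCmax
    have hCmin : IsMinTransversal E C := by
      simpa [dualHG] using hCdual
    have hTC : T ⊆ C := (Finset.subset_insert v T).trans hsubC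
    have hTeq : T = C := hCmin.2 T hTC hTmin.1
    exact hvT (hTeq ▸ hsubC (Finset.mem_insert_self v T))
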